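/- The number of d×d 0-1 matrices (d ≥ 2) with exactly two ones in every row and every column that contain no proper nonempty submatrix with the same property equals (d!)²/(2d). -/

import Mathlib

open Finset

def omegaSet {ι κ : Type*} [Fintype ι] [Fintype κ] [DecidableEq ℤ]
    (A : Matrix ι κ ℤ) : Set (Matrix ι κ ℤ) :=
  {C | (∀ i j, (A i j = 0 → C i j = 0) ∧ (A i j = 1 → C i j = 1 ∨ C i j = -1)) ∧
       (∀ i, ∏ j, (if C i j = 0 then 1 else C i j) = -1) ∧
       (∀ j, ∏ i, (if C i j = 0 then 1 else C i j) = -1)}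

def TwoPerLine {d : ℕ} (B : Matrix (Fin d) (Fin d) ℤ) : Prop :=
  (∀ i j, B i j = 0 ∨ B i j = 1) ∧
  (∀ i, ∑ j, B i j = 2) ∧ (∀ j, ∑ i, B i j = 2)

def MinimalTwoPerLine {d : ℕ} (B : Matrix (Fin d) (Fin d) ℤ) : Prop :=
  TwoPerLine B ∧
  ∀ s t : Finset (Fin d), s.Nonempty →
    (∀ i ∈ s, ∑ j ∈ t, B i j = 2) → (∀ j ∈ t, ∑ i ∈ s, B i j = 2) →
    s = Finset.univ ∧ t = Finset.univ

set_option linter.unusedSectionVars false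
set_option maxHeartbeats 1000000

namespace MinCount
open Equiv
variable {d : ℕ} [NeZero d]


def FullCycle (π : Equiv.Perm (Fin d)) : Prop :=
  ∀ t : Finset (Fin d), t.Nonempty → (∀ x ∈ t, π x ∈ t) → t = Finset.univ

lemma closed_image_eq {α : Type*} [DecidableEq α] (f : α → α) (hf : Function.Injective f)
    (t : Finset α) (h : ∀ x ∈ t, f x ∈ t) : t.image f = t := by
  apply Finset.eq_of_subset_of_card_le
  · intro x hx
    obtain ⟨y, hy, rfl⟩ := Finset.mem_image.mp hx
    exact h y hy
  · rw [Finset.card_image_of_injective _ hf]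

lemma FullCycle.inv {π : Equiv.Perm (Fin d)} (h : FullCycle π) : FullCycle π⁻¹ := by
  intro t ht hcl
  apply h t ht
  intro x hx
  have him := closed_image_eq (⇑π⁻¹) (Equiv.injective _) t hcl
  rw [← him] at hx
  obtain ⟨y, hy, rfl⟩ := Finset.mem_image.mp hx
  simpa using hy

lemma FullCycle.ne_self {π : Equiv.Perm (Fin d)} (h : FullCycle π) (hd : 2 ≤ d) (x : Fin d) :
    π x ≠ x := by
  intro hx
  have := h {x} ⟨x, by simp⟩ (by simp [hx])
  have hcard := congrArg Finset.card this
  simp at hcard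
  omega

lemma FullCycle.conj {π : Equiv.Perm (Fin d)} (h : FullCycle π) (g : Equiv.Perm (Fin d)) :
    FullCycle (g * π * g⁻¹) := by
  intro t ht hcl
  have hs : t.image ⇑g⁻¹ = Finset.univ := by
    apply h
    · exact ht.image _
    · intro x hx
      obtain ⟨y, hy, rfl⟩ := Finset.mem_image.mp hx
      refine Finset.mem_image.mpr ⟨g (π (g⁻¹ y)), ?_, by simp⟩
      have := hcl y hy
      simpa [Equiv.Perm.mul_apply] using this
  apply Finset.eq_univ_of_card
  have := congrArg Finset.card hs
  rwa [Finset.card_image_of_injective _ (Equiv.injective _), Finset.card_univ] at this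

open Fin.NatCast in
lemma fullCycle_finRotate {n : ℕ} : FullCycle (finRotate (n + 1)) := by
  intro t ht hcl
  obtain ⟨j, hj⟩ := ht
  have hnat : ∀ k : ℕ, j + (k : Fin (n + 1)) ∈ t := by
    intro k
    induction k with
    | zero => simpa using hj
    | succ m ih =>
      have := hcl _ ih
      rw [finRotate_succ_apply] at this
      simpa [add_assoc, Nat.cast_add, Nat.cast_one] using this
  apply Finset.eq_univ_of_forall
  intro x
  have := hnat ((x - j : Fin (n + 1)) : ℕ)
  rwa [Fin.cast_val_eq_self, add_sub_cancel] at this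


lemma FullCycle.le_of_pow_zero {π : Equiv.Perm (Fin d)} (h : FullCycle π) {c : ℕ}
    (hc : 0 < c) (hz : (π ^ c) 0 = 0) : d ≤ c := by
  have h0 : 0 < d := Nat.pos_of_ne_zero (NeZero.ne d)
  set O : Finset (Fin d) := (Finset.range c).image (fun k => (π ^ k) 0) with hO
  have hmem : ∀ k : ℕ, (π ^ k) 0 ∈ O := by
    intro k
    have : (π ^ (k % c)) 0 = (π ^ k) 0 := by
      conv_rhs => rw [← Nat.mod_add_div k c, pow_add, Equiv.Perm.mul_apply]
      congr 1
      have : (π ^ (c * (k / c))) 0 = 0 := by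
        rw [pow_mul]
        induction (k / c) with
        | zero => simp
        | succ m ih => rw [pow_succ, Equiv.Perm.mul_apply, hz, ih]
      rw [this]
    rw [← this]
    exact Finset.mem_image.mpr ⟨k % c, Finset.mem_range.mpr (Nat.mod_lt _ hc), rfl⟩
  have hOuniv : O = Finset.univ := by
    apply h
    · exact ⟨(π ^ 0) 0, hmem 0⟩
    · intro x hx
      obtain ⟨k, _, rfl⟩ := Finset.mem_image.mp hx
      have : π ((π ^ k) 0) = (π ^ (k + 1)) 0 := by
        rw [pow_succ', Equiv.Perm.mul_apply]
      rw [this]; exact hmem _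
  have h1 : O.card = d := by rw [hOuniv]; simp
  have h2 : O.card ≤ c := le_trans (Finset.card_image_le) (by simp)
  omega

lemma FullCycle.pow_injOn {π : Equiv.Perm (Fin d)} (h : FullCycle π) {a b : ℕ}
    (ha : a < d) (hb : b < d) (hab : (π ^ a) 0 = (π ^ b) 0) : a = b := by
  rcases Nat.lt_trichotomy a b with hlt | heq | hlt
  · exfalso
    have : (π ^ (b - a)) 0 = 0 := by
      have : (π ^ a) ((π ^ (b - a)) 0) = (π ^ a) 0 := by
        rw [← Equiv.Perm.mul_apply, ← pow_add, Nat.add_sub_cancel' (le_of_lt hlt), hab]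
      exact (Equiv.injective _) this
    have := h.le_of_pow_zero (by omega) this
    omega
  · exact heq
  · exfalso
    have : (π ^ (a - b)) 0 = 0 := by
      have : (π ^ b) ((π ^ (a - b)) 0) = (π ^ b) 0 := by
        rw [← Equiv.Perm.mul_apply, ← pow_add, Nat.add_sub_cancel' (le_of_lt hlt), hab.symm]
      exact (Equiv.injective _) this
    have := h.le_of_pow_zero (by omega) this
    omega

noncomputable def FullCycle.orbitEquiv {π : Equiv.Perm (Fin d)} (h : FullCycle π) :
    Equiv.Perm (Fin d) :=
  Equiv.ofBijective (fun k => (π ^ (k : ℕ)) 0)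
    ((Finite.injective_iff_bijective).mp (fun k1 k2 hk =>
      Fin.ext (h.pow_injOn k1.isLt k2.isLt hk)))

lemma FullCycle.orbitEquiv_apply {π : Equiv.Perm (Fin d)} (h : FullCycle π) (k : Fin d) :
    h.orbitEquiv k = (π ^ (k : ℕ)) 0 := rfl

lemma FullCycle.pow_card {π : Equiv.Perm (Fin d)} (h : FullCycle π) : (π ^ d) 0 = 0 := by
  have h0 : 0 < d := Nat.pos_of_ne_zero (NeZero.ne d)
  obtain ⟨k, hk⟩ := (h.orbitEquiv).surjective ((π ^ d) 0)
  rw [h.orbitEquiv_apply] at hk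
  rcases Nat.eq_zero_or_pos (k : ℕ) with h1 | h1
  · rw [← hk, h1]; simp
  · exfalso
    have : (π ^ (d - (k : ℕ))) 0 = 0 := by
      have : (π ^ (k : ℕ)) ((π ^ (d - (k : ℕ))) 0) = (π ^ (k : ℕ)) 0 := by
        rw [← Equiv.Perm.mul_apply, ← pow_add, Nat.add_sub_cancel' (le_of_lt k.isLt), hk]
      exact (Equiv.injective _) this
    have := h.le_of_pow_zero (by omega) this
    have := k.isLt
    omega

open Fin.NatCast in
lemma finRotate_pow_zero {n : ℕ} (k : ℕ) : ((finRotate (n + 1)) ^ k) 0 = (k : Fin (n + 1)) := by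
  induction k with
  | zero => simp
  | succ m ih =>
    rw [pow_succ', Equiv.Perm.mul_apply, ih, finRotate_succ_apply]
    push_cast
    ring


lemma FullCycle.orbitEquiv_zero {π : Equiv.Perm (Fin d)} (h : FullCycle π) :
    h.orbitEquiv 0 = 0 := by
  rw [h.orbitEquiv_apply]; simp

lemma FullCycle.conj_orbitEquiv {π : Equiv.Perm (Fin d)} (h : FullCycle π) :
    h.orbitEquiv * finRotate d * h.orbitEquiv⁻¹ = π := by
  obtain ⟨n, rfl⟩ := Nat.exists_eq_succ_of_ne_zero (NeZero.ne d)
  have key : ∀ k, h.orbitEquiv (finRotate (n + 1) k) = π (h.orbitEquiv k) := by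
    intro k
    rw [finRotate_succ_apply]
    rcases eq_or_ne k (Fin.last n) with rfl | hk
    · rw [Fin.last_add_one, h.orbitEquiv_zero, h.orbitEquiv_apply]
      have : π ((π ^ (Fin.last n : ℕ)) 0) = (π ^ (n + 1)) 0 := by
        rw [pow_succ', Equiv.Perm.mul_apply, Fin.val_last]
      rw [this, h.pow_card]
    · have hlt : k < Fin.last n := lt_of_le_of_ne (Fin.le_last k) hk
      rw [h.orbitEquiv_apply, h.orbitEquiv_apply, Fin.val_add_one_of_lt hlt,
        pow_succ', Equiv.Perm.mul_apply]
  apply Equiv.ext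
  intro x
  have := key (h.orbitEquiv⁻¹ x)
  simp only [Equiv.Perm.inv_def, Equiv.apply_symm_apply] at this
  simpa [Equiv.Perm.mul_apply] using this

open Fin.NatCast in
lemma orbitEquiv_conj (g : Equiv.Perm (Fin d)) (hg : g 0 = 0)
    (h : FullCycle (g * finRotate d * g⁻¹)) : h.orbitEquiv = g := by
  obtain ⟨n, rfl⟩ := Nat.exists_eq_succ_of_ne_zero (NeZero.ne d)
  ext k
  rw [h.orbitEquiv_apply, conj_pow]
  have hg0 : g⁻¹ 0 = 0 := by
    nth_rewrite 1 [← hg]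
    exact g.symm_apply_apply 0
  simp only [Equiv.Perm.mul_apply, hg0, finRotate_pow_zero, Fin.cast_val_eq_self]

noncomputable def fullCycleEquiv (hd : 2 ≤ d) :
    {π : Equiv.Perm (Fin d) // FullCycle π} ≃ {g : Equiv.Perm (Fin d) // g 0 = 0} where
  toFun π := ⟨π.2.orbitEquiv, π.2.orbitEquiv_zero⟩
  invFun g := ⟨g.1 * finRotate d * g.1⁻¹, by
    obtain ⟨n, rfl⟩ := Nat.exists_eq_succ_of_ne_zero (NeZero.ne d)
    exact fullCycle_finRotate.conj g.1⟩
  left_inv π := Subtype.ext π.2.conj_orbitEquiv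
  right_inv g := by
    apply Subtype.ext
    apply orbitEquiv_conj g.1 g.2
    obtain ⟨n, rfl⟩ := Nat.exists_eq_succ_of_ne_zero (NeZero.ne d)
    exact fullCycle_finRotate.conj _

def stabEquiv {n : ℕ} : {g : Equiv.Perm (Fin (n + 1)) // g 0 = 0} ≃ Equiv.Perm (Fin n) where
  toFun g := (Equiv.Perm.decomposeFin g.1).2
  invFun e := ⟨Equiv.Perm.decomposeFin.symm (0, e), by simp⟩
  left_inv g := by
    apply Subtype.ext
    have h1 : (Equiv.Perm.decomposeFin g.1).1 = g.1 0 := by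
      conv_rhs => rw [← Equiv.Perm.decomposeFin.symm_apply_apply g.1]
      rw [show Equiv.Perm.decomposeFin g.1 =
        ((Equiv.Perm.decomposeFin g.1).1, (Equiv.Perm.decomposeFin g.1).2) from rfl]
      rw [Equiv.Perm.decomposeFin_symm_apply_zero]
    have : Equiv.Perm.decomposeFin g.1 = (0, (Equiv.Perm.decomposeFin g.1).2) :=
      Prod.ext (by rw [h1, g.2]) rfl
    calc Equiv.Perm.decomposeFin.symm (0, (Equiv.Perm.decomposeFin g.1).2)
        = Equiv.Perm.decomposeFin.symm (Equiv.Perm.decomposeFin g.1) := by rw [← this]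
      _ = g.1 := Equiv.Perm.decomposeFin.symm_apply_apply g.1
  right_inv e := by simp

lemma card_fullCycle (hd : 2 ≤ d) :
    Nat.card {π : Equiv.Perm (Fin d) // FullCycle π} = (d - 1).factorial := by
  obtain ⟨n, rfl⟩ := Nat.exists_eq_succ_of_ne_zero (NeZero.ne d)
  rw [Nat.card_congr ((fullCycleEquiv hd).trans stabEquiv)]
  simp [Nat.card_eq_fintype_card, Fintype.card_perm]



def Pm (σ : Equiv.Perm (Fin d)) : Matrix (Fin d) (Fin d) ℤ :=
  fun i j => if σ i = j then 1 else 0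

lemma Pm_row_sum (σ : Equiv.Perm (Fin d)) (i : Fin d) (t : Finset (Fin d)) :
    ∑ j ∈ t, Pm σ i j = if σ i ∈ t then 1 else 0 :=
  Finset.sum_ite_eq t (σ i) (fun _ => (1 : ℤ))

lemma Pm_col_sum (σ : Equiv.Perm (Fin d)) (j : Fin d) (s : Finset (Fin d)) :
    ∑ i ∈ s, Pm σ i j = if σ⁻¹ j ∈ s then 1 else 0 := by
  have : ∀ i, Pm σ i j = if σ⁻¹ j = i then (1 : ℤ) else 0 := by
    intro i
    simp only [Pm]
    congr 1
    · simp only [eq_iff_iff]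
      constructor
      · intro h; rw [← h]; simp
      · intro h; rw [← h]; simp
  rw [Finset.sum_congr rfl (fun i _ => this i)]
  exact Finset.sum_ite_eq s (σ⁻¹ j) (fun _ => (1 : ℤ))

lemma pm_add_row (σ τ : Equiv.Perm (Fin d)) (i : Fin d) (t : Finset (Fin d)) :
    ∑ j ∈ t, (Pm σ + Pm τ) i j
      = (if σ i ∈ t then 1 else 0) + (if τ i ∈ t then 1 else 0) := by
  simp only [Matrix.add_apply, Finset.sum_add_distrib, Pm_row_sum]

lemma pm_add_col (σ τ : Equiv.Perm (Fin d)) (j : Fin d) (s : Finset (Fin d)) :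
    ∑ i ∈ s, (Pm σ + Pm τ) i j
      = (if σ⁻¹ j ∈ s then 1 else 0) + (if τ⁻¹ j ∈ s then 1 else 0) := by
  simp only [Matrix.add_apply, Finset.sum_add_distrib, Pm_col_sum]

lemma pm_add_minimal {σ τ : Equiv.Perm (Fin d)} (h : FullCycle (τ * σ⁻¹)) (hd : 2 ≤ d) :
    MinimalTwoPerLine (Pm σ + Pm τ) := by
  have hne : ∀ i, σ i ≠ τ i := by
    intro i hi
    exact h.ne_self hd (σ i) (by simp [Equiv.Perm.mul_apply, ← hi])
  constructor
  · refine ⟨?_, ?_, ?_⟩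
    · intro i j
      by_cases h1 : σ i = j <;> by_cases h2 : τ i = j
      · exact absurd (h1.trans h2.symm) (hne i)
      · right; simp [Pm, Matrix.add_apply, h1, h2]
      · right; simp [Pm, Matrix.add_apply, h1, h2]
      · left; simp [Pm, Matrix.add_apply, h1, h2]
    · intro i; rw [pm_add_row]; simp
    · intro j; rw [pm_add_col]; simp
  · intro s t hs hrow hcol
    have hrow' : ∀ i ∈ s, σ i ∈ t ∧ τ i ∈ t := by
      intro i hi
      have := hrow i hi
      rw [pm_add_row] at this
      split_ifs at this with h1 h2 h2 <;> first | exact ⟨h1, h2⟩ | omega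
    have hcol' : ∀ j ∈ t, σ⁻¹ j ∈ s ∧ τ⁻¹ j ∈ s := by
      intro j hj
      have := hcol j hj
      rw [pm_add_col] at this
      split_ifs at this with h1 h2 h2 <;> first | exact ⟨h1, h2⟩ | omega
    obtain ⟨i0, hi0⟩ := hs
    have htuniv : t = Finset.univ := by
      apply h t ⟨σ i0, (hrow' i0 hi0).1⟩
      intro j hj
      have h1 := (hcol' j hj).1
      have := (hrow' _ h1).2
      simpa [Equiv.Perm.mul_apply] using this
    refine ⟨?_, htuniv⟩
    apply Finset.eq_univ_of_forall
    intro i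
    have : σ i ∈ t := htuniv ▸ Finset.mem_univ _
    have := (hcol' (σ i) this).1
    simpa using this


/-- sum of 0/1 entries equals cardinality of the 1-set -/
lemma card_ones {n : ℕ} {v : Fin n → ℤ} (h01 : ∀ j, v j = 0 ∨ v j = 1) {c : ℕ}
    (hsum : ∑ j, v j = (c : ℤ)) :
    (Finset.univ.filter (fun j => v j = 1)).card = c := by
  classical
  have : ∑ j, v j = ∑ j, (if v j = 1 then (1 : ℤ) else 0) := by
    apply Finset.sum_congr rfl
    intro j _
    rcases h01 j with h | h <;> simp [h]
  rw [this, Finset.sum_boole] at hsum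
  exact_mod_cast hsum

lemma minimal_decomp {B : Matrix (Fin d) (Fin d) ℤ} (hB : MinimalTwoPerLine B) (hd : 2 ≤ d) :
    ∃ σ τ : Equiv.Perm (Fin d), FullCycle (τ * σ⁻¹) ∧ B = Pm σ + Pm τ := by
  classical
  obtain ⟨⟨h01, hrow, hcol⟩, hmin⟩ := hB
  set R : Fin d → Finset (Fin d) := fun i => univ.filter (fun j => B i j = 1) with hR
  have hRcard : ∀ i, (R i).card = 2 := fun i => card_ones (h01 i) (hrow i)
  have hCcard : ∀ j, (univ.filter (fun i => B i j = 1)).card = 2 := by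
    intro j
    exact card_ones (fun i => h01 i j) (hcol j)
  -- Hall condition
  have hall : ∀ s : Finset (Fin d), s.card ≤ (s.biUnion R).card := by
    intro s
    set U := s.biUnion R with hU
    have key : ∀ i ∈ s, (R i).card = ∑ j ∈ U, (if B i j = 1 then 1 else 0) := by
      intro i hi
      have hfil : U.filter (fun j => B i j = 1) = R i := by
        ext j
        simp only [Finset.mem_filter, hR, Finset.mem_univ, true_and]
        constructor
        · rintro ⟨-, h⟩; exact h
        · intro h
          exact ⟨Finset.mem_biUnion.mpr ⟨i, hi, by simp [hR, h]⟩, h⟩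
      rw [Finset.sum_boole, hfil]
      simp
    have h1 : 2 * s.card = ∑ i ∈ s, (R i).card := by
      rw [Finset.sum_congr rfl (fun i _ => hRcard i)]
      simp [mul_comm]
    have h2 : ∑ i ∈ s, (R i).card = ∑ j ∈ U, ∑ i ∈ s, (if B i j = 1 then 1 else 0) := by
      rw [Finset.sum_congr rfl key, Finset.sum_comm]
    have h3 : ∀ j, ∑ i ∈ s, (if B i j = 1 then 1 else 0) ≤ 2 := by
      intro j
      rw [Finset.sum_boole]
      norm_cast
      rw [← hCcard j]
      apply Finset.card_le_card
      intro i hi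
      simp only [Finset.mem_filter] at hi ⊢
      exact ⟨Finset.mem_univ _, hi.2⟩
    have h4 : ∑ j ∈ U, ∑ i ∈ s, (if B i j = 1 then 1 else 0) ≤ 2 * U.card := by
      calc _ ≤ ∑ _j ∈ U, 2 := Finset.sum_le_sum (fun j _ => h3 j)
        _ = 2 * U.card := by simp [mul_comm]
      
    omega
  obtain ⟨f, hfinj, hf⟩ := (Finset.all_card_le_biUnion_card_iff_exists_injective R).mp hall
  have hfB : ∀ i, B i (f i) = 1 := by
    intro i
    have := hf i
    simp only [hR, Finset.mem_filter] at this
    exact this.2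
  let σ : Equiv.Perm (Fin d) := Equiv.ofBijective f (Finite.injective_iff_bijective.mp hfinj)
  have hσf : ∀ i, σ i = f i := fun i => rfl
  set C : Matrix (Fin d) (Fin d) ℤ := fun i j => B i j - Pm σ i j with hCdef
  have hC01 : ∀ i j, C i j = 0 ∨ C i j = 1 := by
    intro i j
    by_cases hs : σ i = j
    · left
      have hB1 : B i j = 1 := by rw [← hs, hσf]; exact hfB i
      simp [hCdef, Pm, hs, hB1]
    · rcases h01 i j with h | h
      · left; simp [hCdef, Pm, hs, h]
      · right; simp [hCdef, Pm, hs, h]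
  have hCσ : ∀ i, C i (σ i) = 0 := by
    intro i
    have hB1 : B i (σ i) = 1 := by rw [hσf]; exact hfB i
    simp [hCdef, Pm, hB1]
  have hCrow : ∀ i, ∑ j, C i j = 1 := by
    intro i
    simp only [hCdef, Finset.sum_sub_distrib, hrow i, Pm_row_sum]
    simp
  have hCcol' : ∀ j, ∑ i, C i j = 1 := by
    intro j
    simp only [hCdef, Finset.sum_sub_distrib, hcol j, Pm_col_sum]
    simp
  have hrowone : ∀ i, (univ.filter (fun j => C i j = 1)).card = 1 := by
    intro i
    exact card_ones (hC01 i) (by exact_mod_cast hCrow i)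
  have hcolone : ∀ j, (univ.filter (fun i => C i j = 1)).card = 1 := by
    intro j
    exact card_ones (fun i => hC01 i j) (by exact_mod_cast hCcol' j)
  have hex : ∀ i, ∃ j, C i j = 1 ∧ ∀ j', C i j' = 1 → j' = j := by
    intro i
    obtain ⟨a, ha⟩ := Finset.card_eq_one.mp (hrowone i)
    refine ⟨a, ?_, ?_⟩
    · have : a ∈ univ.filter (fun j => C i j = 1) := ha ▸ Finset.mem_singleton_self a
      exact (Finset.mem_filter.mp this).2
    · intro j' hj'
      have : j' ∈ univ.filter (fun j => C i j = 1) := by simp [hj']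
      rw [ha] at this
      exact Finset.mem_singleton.mp this
  choose τf hτ1 hτu using hex
  have hτinj : Function.Injective τf := by
    intro i1 i2 h
    obtain ⟨a, ha⟩ := Finset.card_eq_one.mp (hcolone (τf i1))
    have m1 : i1 ∈ univ.filter (fun i => C i (τf i1) = 1) := by simp [hτ1 i1]
    have m2 : i2 ∈ univ.filter (fun i => C i (τf i1) = 1) := by
      simp only [Finset.mem_filter, Finset.mem_univ, true_and]
      rw [h]; exact hτ1 i2
    rw [ha] at m1 m2
    rw [Finset.mem_singleton.mp m1, Finset.mem_singleton.mp m2]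
  let τ : Equiv.Perm (Fin d) := Equiv.ofBijective τf (Finite.injective_iff_bijective.mp hτinj)
  have hτf : ∀ i, τ i = τf i := fun i => rfl
  have hCPm : C = Pm τ := by
    funext i j
    by_cases h : τf i = j
    · rw [← h]
      simp [Pm, hτf, hτ1 i]
    · have : C i j ≠ 1 := fun hc => h ((hτu i j hc).symm)
      rcases hC01 i j with h0 | h1
      · rw [h0]; simp [Pm, hτf, h]
      · exact absurd h1 this
  have hBdec : B = Pm σ + Pm τ := by
    funext i j
    have : C i j = Pm τ i j := by rw [hCPm]
    simp only [hCdef] at this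
    simp only [Matrix.add_apply]
    omega
  refine ⟨σ, τ, ?_, hBdec⟩
  have hne : ∀ i, σ i ≠ τ i := by
    intro i h
    have h1 := hCσ i
    have h2 : C i (τ i) = 1 := by rw [hτf]; exact hτ1 i
    rw [h] at h1
    omega
  intro t ht hcl
  set s : Finset (Fin d) := t.image ⇑σ⁻¹ with hs
  have hsrow : ∀ i ∈ s, σ i ∈ t ∧ τ i ∈ t := by
    intro i hi
    obtain ⟨j, hj, rfl⟩ := Finset.mem_image.mp hi
    have h1 : σ (σ⁻¹ j) = j := by simp
    refine ⟨by rwa [h1], ?_⟩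
    have := hcl j hj
    simpa [Equiv.Perm.mul_apply] using this
  have himg : t.image ⇑(τ * σ⁻¹) = t := closed_image_eq _ (Equiv.injective _) t hcl
  have hscol : ∀ j ∈ t, σ⁻¹ j ∈ s ∧ τ⁻¹ j ∈ s := by
    intro j hj
    refine ⟨Finset.mem_image.mpr ⟨j, hj, rfl⟩, ?_⟩
    rw [← himg] at hj
    obtain ⟨y, hy, rfl⟩ := Finset.mem_image.mp hj
    have : τ⁻¹ ((τ * σ⁻¹) y) = σ⁻¹ y := by simp [Equiv.Perm.mul_apply]
    rw [this]
    exact Finset.mem_image.mpr ⟨y, hy, rfl⟩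
  have hmins := hmin s t
    (by obtain ⟨j, hj⟩ := ht; exact ⟨σ⁻¹ j, Finset.mem_image.mpr ⟨j, hj, rfl⟩⟩)
    (by
      intro i hi
      rw [hBdec, pm_add_row]
      obtain ⟨h1, h2⟩ := hsrow i hi
      simp [h1, h2])
    (by
      intro j hj
      rw [hBdec, pm_add_col]
      obtain ⟨h1, h2⟩ := hscol j hj
      rw [if_pos h1, if_pos h2]; norm_num)
  exact hmins.2

lemma fc_ne {σ τ : Equiv.Perm (Fin d)} (h : FullCycle (τ * σ⁻¹)) (hd : 2 ≤ d) (i : Fin d) :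
    σ i ≠ τ i := by
  intro hi
  exact h.ne_self hd (σ i) (by simp [Equiv.Perm.mul_apply, ← hi])

lemma pm_add_inj {σ τ σ' τ' : Equiv.Perm (Fin d)} (hd : 2 ≤ d)
    (h : FullCycle (τ * σ⁻¹)) (h' : FullCycle (τ' * σ'⁻¹))
    (heq : Pm σ + Pm τ = Pm σ' + Pm τ')
    (ho : σ 0 < τ 0) (ho' : σ' 0 < τ' 0) : σ = σ' ∧ τ = τ' := by
  classical
  have hne := fc_ne h hd
  have hne' := fc_ne h' hd
  have hent : ∀ i j, (if σ i = j then (1 : ℤ) else 0) + (if τ i = j then 1 else 0)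
      = (if σ' i = j then 1 else 0) + (if τ' i = j then 1 else 0) := by
    intro i j
    have := congrFun (congrFun heq i) j
    simpa [Matrix.add_apply, Pm] using this
  have hdi : ∀ i, (σ' i = σ i ∧ τ' i = τ i) ∨ (σ' i = τ i ∧ τ' i = σ i) := by
    intro i
    have e1 := hent i (σ' i)
    rw [if_pos rfl, if_neg (fun hh : τ' i = σ' i => hne' i hh.symm)] at e1
    by_cases c1 : σ i = σ' i
    · left
      refine ⟨c1.symm, ?_⟩
      have e2 := hent i (τ' i)
      rw [if_neg (hne' i), if_pos rfl, if_neg (by rw [c1]; exact hne' i)] at e2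
      by_cases c2 : τ i = τ' i
      · exact c2.symm
      · rw [if_neg c2] at e2; norm_num at e2
    · have c2 : τ i = σ' i := by
        by_contra c2
        rw [if_neg c1, if_neg c2] at e1; norm_num at e1
      right
      refine ⟨c2.symm, ?_⟩
      have e2 := hent i (σ i)
      rw [if_pos rfl, if_neg (fun hh : τ i = σ i => hne i hh.symm),
        if_neg (fun hh : σ' i = σ i => c1 hh.symm)] at e2
      by_cases c3 : τ' i = σ i
      · exact c3
      · rw [if_neg c3] at e2; norm_num at e2
  set A : Finset (Fin d) := univ.filter (fun i => σ' i = σ i ∧ τ' i = τ i) with hA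
  have h0A : (0 : Fin d) ∈ A := by
    rcases hdi 0 with hc | hc
    · simp [hA, hc.1, hc.2]
    · exfalso
      rw [hc.1, hc.2] at ho'
      exact lt_asymm ho ho'
  have hclA : ∀ i ∈ A, σ⁻¹ (τ i) ∈ A := by
    intro i hi
    obtain ⟨-, h1, h2⟩ := Finset.mem_filter.mp hi
    rcases hdi (σ⁻¹ (τ i)) with hc | hc
    · exact Finset.mem_filter.mpr ⟨Finset.mem_univ _, hc⟩
    · exfalso
      have hσapp : σ (σ⁻¹ (τ i)) = τ i := by simp
      have : τ' (σ⁻¹ (τ i)) = τ' i := by rw [hc.2, hσapp, h2]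
      have heqi : σ⁻¹ (τ i) = i := τ'.injective this
      have : τ i = σ i := by
        have := congrArg σ heqi
        rwa [hσapp] at this
      exact hne i this.symm
  have htuniv : A.image ⇑σ = Finset.univ := by
    apply h
    · exact ⟨σ 0, Finset.mem_image.mpr ⟨0, h0A, rfl⟩⟩
    · intro x hx
      obtain ⟨i, hi, rfl⟩ := Finset.mem_image.mp hx
      have : (τ * σ⁻¹) (σ i) = σ (σ⁻¹ (τ i)) := by simp [Equiv.Perm.mul_apply]
      rw [this]
      exact Finset.mem_image.mpr ⟨σ⁻¹ (τ i), hclA i hi, rfl⟩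
  have hAuniv : A = Finset.univ := by
    apply Finset.eq_univ_of_card
    have := congrArg Finset.card htuniv
    rwa [Finset.card_image_of_injective _ (Equiv.injective _), Finset.card_univ] at this
  have hall : ∀ i, σ' i = σ i ∧ τ' i = τ i := by
    intro i
    have : i ∈ A := hAuniv ▸ Finset.mem_univ i
    exact (Finset.mem_filter.mp this).2
  exact ⟨Equiv.ext fun i => ((hall i).1).symm, Equiv.ext fun i => ((hall i).2).symm⟩


end MinCount

open MinCount in
theorem minimal_two_count (d : ℕ) (hd : 2 ≤ d) :
    ({B : Matrix (Fin d) (Fin d) ℤ | MinimalTwoPerLine B}.ncard : ℚ)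
      = (Nat.factorial d : ℚ) ^ 2 / (2 * d) := by
  classical
  haveI : NeZero d := ⟨by omega⟩
  set Φ : Equiv.Perm (Fin d) × Equiv.Perm (Fin d) → Matrix (Fin d) (Fin d) ℤ :=
    fun p => Pm p.1 + Pm p.2 with hΦ
  set A : Finset (Equiv.Perm (Fin d) × Equiv.Perm (Fin d)) :=
    Finset.univ.filter (fun p => FullCycle (p.2 * p.1⁻¹)) with hA
  set T := A.filter (fun p => p.1 0 < p.2 0) with hT
  set T' := A.filter (fun p => p.2 0 < p.1 0) with hT'
  have hset : {B : Matrix (Fin d) (Fin d) ℤ | MinimalTwoPerLine B} = ↑(T.image Φ) := by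
    ext B
    simp only [Set.mem_setOf_eq, Finset.coe_image, Set.mem_image, Finset.mem_coe]
    constructor
    · intro hB
      obtain ⟨σ, τ, hfc, hdec⟩ := minimal_decomp hB hd
      have hne0 : σ 0 ≠ τ 0 := fc_ne hfc hd 0
      rcases lt_or_gt_of_ne hne0 with hlt | hgt
      · refine ⟨(σ, τ), ?_, hdec.symm⟩
        simp [hT, hA, Finset.mem_filter, hfc, hlt]
      · have hfc' : FullCycle (σ * τ⁻¹) := by
          have hh : σ * τ⁻¹ = (τ * σ⁻¹)⁻¹ := by simp [mul_inv_rev]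
          rw [hh]; exact hfc.inv
        refine ⟨(τ, σ), ?_, ?_⟩
        · simp [hT, hA, Finset.mem_filter, hfc', hgt]
        · simp only [hΦ]
          rw [add_comm]
          exact hdec.symm
    · rintro ⟨p, hp, rfl⟩
      rw [hT, Finset.mem_filter, hA, Finset.mem_filter] at hp
      exact pm_add_minimal hp.1.2 hd
  have hinj : Set.InjOn Φ ↑T := by
    intro p hp q hq hpq
    obtain ⟨hpA, hpo⟩ := Finset.mem_filter.mp (Finset.mem_coe.mp hp)
    obtain ⟨hqA, hqo⟩ := Finset.mem_filter.mp (Finset.mem_coe.mp hq)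
    have h1 := (Finset.mem_filter.mp hpA).2
    have h2 := (Finset.mem_filter.mp hqA).2
    simp only [hΦ] at hpq
    have := pm_add_inj hd h1 h2 hpq hpo hqo
    exact Prod.ext this.1 this.2
  have hsplit : A.card = T.card + T'.card := by
    have hcompl : T' = A.filter (fun p => ¬ (p.1 0 < p.2 0)) := by
      rw [hT']
      apply Finset.filter_congr
      intro p hp
      have hfc := (Finset.mem_filter.mp hp).2
      have hne0 : p.1 0 ≠ p.2 0 := fc_ne hfc hd 0
      have hne0' : (p.1 0 : ℕ) ≠ (p.2 0 : ℕ) := fun h => hne0 (Fin.ext h)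
      simp only [Fin.lt_def, eq_iff_iff]
      omega
    rw [hcompl, hT]
    exact (Finset.card_filter_add_card_filter_not _).symm
  have hswap : ∀ p ∈ T, (p.2, p.1) ∈ T' := by
    intro p hp
    obtain ⟨hpA, hpo⟩ := Finset.mem_filter.mp hp
    have hfc := (Finset.mem_filter.mp hpA).2
    have hfc' : FullCycle (p.1 * p.2⁻¹) := by
      have hh : p.1 * p.2⁻¹ = (p.2 * p.1⁻¹)⁻¹ := by simp [mul_inv_rev]
      rw [hh]; exact hfc.inv
    exact Finset.mem_filter.mpr ⟨Finset.mem_filter.mpr ⟨Finset.mem_univ _, hfc'⟩, hpo⟩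
  have hswap' : ∀ p ∈ T', (p.2, p.1) ∈ T := by
    intro p hp
    obtain ⟨hpA, hpo⟩ := Finset.mem_filter.mp hp
    have hfc := (Finset.mem_filter.mp hpA).2
    have hfc' : FullCycle (p.1 * p.2⁻¹) := by
      have hh : p.1 * p.2⁻¹ = (p.2 * p.1⁻¹)⁻¹ := by simp [mul_inv_rev]
      rw [hh]; exact hfc.inv
    exact Finset.mem_filter.mpr ⟨Finset.mem_filter.mpr ⟨Finset.mem_univ _, hfc'⟩, hpo⟩
  have hTT' : T.card = T'.card :=
    Finset.card_bij' (fun p _ => (p.2, p.1)) (fun p _ => (p.2, p.1)) hswap hswap'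
      (fun p _ => rfl) (fun p _ => rfl)
  have hAcard : A.card = (d - 1).factorial * d.factorial := by
    have hbij : A.card = ((Finset.univ.filter (fun π : Equiv.Perm (Fin d) => FullCycle π))
        ×ˢ (Finset.univ : Finset (Equiv.Perm (Fin d)))).card := by
      refine Finset.card_bij' (fun p _ => (p.2 * p.1⁻¹, p.1)) (fun q _ => (q.2, q.1 * q.2))
        ?_ ?_ (fun p _ => Prod.ext rfl (inv_mul_cancel_right p.2 p.1))
        (fun q _ => Prod.ext (mul_inv_cancel_right q.1 q.2) rfl)
      · intro p hp
        have hfc := (Finset.mem_filter.mp hp).2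
        exact Finset.mem_product.mpr
          ⟨Finset.mem_filter.mpr ⟨Finset.mem_univ _, hfc⟩, Finset.mem_univ _⟩
      · intro q hq
        have hfc : FullCycle q.1 :=
          (Finset.mem_filter.mp (Finset.mem_product.mp hq).1).2
        refine Finset.mem_filter.mpr ⟨Finset.mem_univ _, ?_⟩
        have hh : q.1 * q.2 * q.2⁻¹ = q.1 := mul_inv_cancel_right q.1 q.2
        rw [hh]
        exact hfc
    rw [hbij, Finset.card_product, Finset.card_univ, Fintype.card_perm, Fintype.card_fin]
    congr 1
    have hc := card_fullCycle (d := d) hd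
    rw [Nat.card_eq_fintype_card, Fintype.card_subtype] at hc
    exact hc
  have hkey : 2 * T.card = d.factorial * (d - 1).factorial := by
    have h2T : 2 * T.card = A.card := by omega
    rw [h2T, hAcard, Nat.mul_comm]
  rw [hset, Set.ncard_coe_finset, Finset.card_image_of_injOn hinj]
  have hdQ : (d : ℚ) ≠ 0 := Nat.cast_ne_zero.mpr (by omega)
  have hfac : (d : ℚ) * ((d - 1).factorial : ℚ) = (d.factorial : ℚ) := by
    exact_mod_cast Nat.mul_factorial_pred (by omega : d ≠ 0)
  have hkeyQ : 2 * (T.card : ℚ) = (d.factorial : ℚ) * ((d - 1).factorial : ℚ) := by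
    exact_mod_cast hkey
  field_simp
  linear_combination (d : ℚ) * hkeyQ + (d.factorial : ℚ) * hfac
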